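/- Let ⟪-,-⟫ be a double (12)-weak Poisson bracket on A associated with the right bimodule structure, and let n ≥ 1. Then there is a unique antisymmetric bilinear operation {-,-} on k[Rep(A,n)] which is a biderivation (a derivation in each argument) and satisfies {a_{ij}, b_{kl}} = ⟪a,b⟫'_{ij}·⟪a,b⟫''_{kl} for all a,b ∈ A and 1 ≤ i,j,k,l ≤ n; this operation is a Poisson bracket; and it restricts to a Poisson bracket on the subalgebra k[Rep(A,n)]^{tr} generated by the trace functions tr X(a) = Σ_{i=1}^n a_{ii}, a ∈ A. -/

import Mathlib

open scoped TensorProduct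

noncomputable section

/-- A (`k`-linear) `A`-bimodule-type structure on a `k`-module `M`,
given by a three-slot action `a · d · b`. -/
structure BimodOn (k A M : Type*) [CommSemiring k] [Ring A] [Algebra k A]
    [AddCommMonoid M] [Module k M] where
  act : A → M → A → M
  add_left : ∀ (a a' : A) (d : M) (b : A), act (a + a') d b = act a d b + act a' d b
  add_mid : ∀ (a : A) (d d' : M) (b : A), act a (d + d') b = act a d b + act a d' b
  add_right : ∀ (a : A) (d : M) (b b' : A), act a d (b + b') = act a d b + act a d b'
  smul_left : ∀ (c : k) (a : A) (d : M) (b : A), act (c • a) d b = c • act a d b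
  smul_mid : ∀ (c : k) (a : A) (d : M) (b : A), act a (c • d) b = c • act a d b
  smul_right : ∀ (c : k) (a : A) (d : M) (b : A), act a d (c • b) = c • act a d b
  act_one_one : ∀ d : M, act 1 d 1 = d
  act_mul : ∀ (a a' : A) (d : M) (b b' : A), act a (act a' d b') b = act (a * a') d (b' * b)

/-- An `A`-bimodule structure on `A ⊗[k] A`. -/
abbrev BimodStr (k A : Type*) [CommSemiring k] [Ring A] [Algebra k A] :=
  BimodOn k A (A ⊗[k] A)

section Defs

variable (k A : Type*) [CommSemiring k] [Ring A] [Algebra k A]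

/-- The swap automorphism `°` of `A ⊗[k] A`, `a ⊗ b ↦ b ⊗ a`. -/
def swapT : A ⊗[k] A →ₗ[k] A ⊗[k] A := (TensorProduct.comm k A A).toLinearMap

variable {k A}

namespace BimodOn

/-- The swap bimodule structure `a * d * b = (a · d° · b)°` associated with a
bimodule structure on `A ⊗[k] A`. -/
def star (S : BimodStr k A) (a : A) (d : A ⊗[k] A) (b : A) : A ⊗[k] A :=
  swapT k A (S.act a (swapT k A d) b)

/-- A bimodule structure on `A ⊗[k] A` is swap-commuting if it commutes with its
swap bimodule structure. -/
def SwapCommuting (S : BimodStr k A) : Prop :=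
  ∀ (a₁ a₂ b₁ b₂ : A) (d : A ⊗[k] A),
    S.act a₁ (S.star a₂ d b₂) b₁ = S.star a₂ (S.act a₁ d b₁) b₂

end BimodOn

end Defs

/-- A double bracket on `A` associated with a bimodule structure `S` on `A ⊗[k] A`
(with swap bimodule structure `S.star`). -/
structure DoubleBracket {k A : Type*} [CommSemiring k] [Ring A] [Algebra k A]
    (S : BimodStr k A) where
  br : A →ₗ[k] A →ₗ[k] A ⊗[k] A
  antisymm : ∀ a b : A, br a b = - swapT k A (br b a)
  leibniz_right : ∀ a b c : A, br a (b * c) = S.act b (br a c) 1 + S.act 1 (br a b) c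
  leibniz_left : ∀ a b c : A, br (b * c) a = S.star b (br c a) 1 + S.star 1 (br b a) c

section Taus

variable (k A : Type*) [CommSemiring k] [Ring A] [Algebra k A]

/-- `τ_{(123)}` on `A^{⊗3}`: `a ⊗ b ⊗ c ↦ c ⊗ a ⊗ b`. -/
def tau123 : (A ⊗[k] A) ⊗[k] A →ₗ[k] (A ⊗[k] A) ⊗[k] A :=
  ((TensorProduct.comm k (A ⊗[k] A) A).trans (TensorProduct.assoc k A A A).symm).toLinearMap

/-- `τ_{(132)}` on `A^{⊗3}`: `a ⊗ b ⊗ c ↦ b ⊗ c ⊗ a`. -/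
def tau132 : (A ⊗[k] A) ⊗[k] A →ₗ[k] (A ⊗[k] A) ⊗[k] A :=
  ((TensorProduct.assoc k A A A).trans (TensorProduct.comm k A (A ⊗[k] A))).toLinearMap

/-- `τ_{(12)}` on `A^{⊗3}`: `a ⊗ b ⊗ c ↦ b ⊗ a ⊗ c`. -/
def tau12 : (A ⊗[k] A) ⊗[k] A →ₗ[k] (A ⊗[k] A) ⊗[k] A :=
  (TensorProduct.congr (TensorProduct.comm k A A) (LinearEquiv.refl k A)).toLinearMap

variable {k A}

/-- `⟪a, -⟫_L : A ⊗ A → A ⊗ A ⊗ A`, `b₁ ⊗ b₂ ↦ ⟪a, b₁⟫ ⊗ b₂`. -/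
def trL (br : A →ₗ[k] A →ₗ[k] A ⊗[k] A) (a : A) :
    A ⊗[k] A →ₗ[k] (A ⊗[k] A) ⊗[k] A :=
  TensorProduct.map (br a) LinearMap.id

/-- The double Jacobiator of a bilinear operation `A × A → A ⊗ A`:
`⟪a,b,c⟫ = ⟪a,⟪b,c⟫⟫_L + τ_{(123)} ⟪b,⟪c,a⟫⟫_L + τ_{(132)} ⟪c,⟪a,b⟫⟫_L`. -/
def jac (br : A →ₗ[k] A →ₗ[k] A ⊗[k] A) (a b c : A) : (A ⊗[k] A) ⊗[k] A :=
  trL br a (br b c) + tau123 k A (trL br b (br c a)) + tau132 k A (trL br c (br a b))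

end Taus

end

/-- The `(i,j)` matrix entry as a `k`-linear map. -/
noncomputable def matEntry {k R : Type*} [CommSemiring k] [CommRing R] [Algebra k R]
    {n : ℕ} (i j : Fin n) : Matrix (Fin n) (Fin n) R →ₗ[k] R where
  toFun M := M i j
  map_add' := by intro M N; simp
  map_smul' := by intro c M; simp

/-- For `d ∈ A ⊗ A`, the function `d_{ij,kl} = d'_{ij} d''_{kl}` on the representation
space, expressed through the universal matrix representation `X`. -/
noncomputable def entPair {k A R : Type*} [CommRing k] [Ring A] [Algebra k A]
    [CommRing R] [Algebra k R] {n : ℕ}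
    (X : A →ₐ[k] Matrix (Fin n) (Fin n) R) (i j l m : Fin n) :
    A ⊗[k] A →ₗ[k] R :=
  TensorProduct.lift ((LinearMap.mul k R).compl₁₂
    ((matEntry i j).comp X.toLinearMap) ((matEntry l m).comp X.toLinearMap))

universe u
section Helpers
variable {k A R : Type*} [Field k] [Ring A] [Algebra k A]
    [CommRing R] [Algebra k R] {n : ℕ}
variable (X : A →ₐ[k] Matrix (Fin n) (Fin n) R)

lemma swapT_tmul (u v : A) : swapT k A (u ⊗ₜ[k] v) = v ⊗ₜ[k] u := rfl

lemma entPair_tmul (i j l m : Fin n) (u v : A) :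
    entPair X i j l m (u ⊗ₜ[k] v) = X u i j * X v l m := rfl

lemma entPair_swap (i j l m : Fin n) (d : A ⊗[k] A) :
    entPair X i j l m (swapT k A d) = entPair X l m i j d := by
  induction d using TensorProduct.induction_on with
  | zero => simp
  | tmul u v => rw [swapT_tmul, entPair_tmul, entPair_tmul, mul_comm]
  | add x y hx hy => rw [map_add, map_add, map_add, hx, hy]

end Helpers
section Helpers2
variable {k A R : Type*} [Field k] [Ring A] [Algebra k A]
    [CommRing R] [Algebra k R] {n : ℕ}
variable (X : A →ₐ[k] Matrix (Fin n) (Fin n) R)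
variable {S : BimodStr k A}
  (hS : ∀ (a b : A) (d : A ⊗[k] A),
      S.act a d b = ((1 : A) ⊗ₜ[k] a) * d * ((1 : A) ⊗ₜ[k] b))

include hS

lemma act_tmul (a c u v : A) : S.act a (u ⊗ₜ[k] v) c = u ⊗ₜ[k] (a * v * c) := by
  rw [hS, Algebra.TensorProduct.tmul_mul_tmul, Algebra.TensorProduct.tmul_mul_tmul,
    one_mul, mul_one]

lemma star_tmul (a c u v : A) : S.star a (u ⊗ₜ[k] v) c = (a * u * c) ⊗ₜ[k] v := by
  rw [BimodOn.star, swapT_tmul, act_tmul hS, swapT_tmul]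

lemma entPair_act_left (i j l m : Fin n) (b : A) (d : A ⊗[k] A) :
    entPair X i j l m (S.act b d 1) = ∑ p, X b l p * entPair X i j p m d := by
  induction d using TensorProduct.induction_on with
  | zero =>
      have : S.act b (0 : A ⊗[k] A) 1 = 0 := by rw [hS]; simp
      simp [this]
  | tmul u v =>
      rw [act_tmul hS, mul_one, entPair_tmul, map_mul]
      rw [Matrix.mul_apply]
      rw [Finset.mul_sum]
      refine Finset.sum_congr rfl fun p _ => ?_
      rw [entPair_tmul]; ring
  | add x y hx hy =>
      have : S.act b (x + y) 1 = S.act b x 1 + S.act b y 1 := by rw [hS, hS, hS, mul_add, add_mul]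
      rw [this, map_add, hx, hy, ← Finset.sum_add_distrib]
      refine Finset.sum_congr rfl fun p _ => ?_
      rw [map_add]; ring

lemma entPair_act_right (i j l m : Fin n) (c : A) (d : A ⊗[k] A) :
    entPair X i j l m (S.act 1 d c) = ∑ r, entPair X i j l r d * X c r m := by
  induction d using TensorProduct.induction_on with
  | zero =>
      have : S.act (1:A) (0 : A ⊗[k] A) c = 0 := by rw [hS]; simp
      simp [this]
  | tmul u v =>
      rw [act_tmul hS, one_mul, entPair_tmul, map_mul]
      rw [Matrix.mul_apply, Finset.mul_sum]
      refine Finset.sum_congr rfl fun p _ => ?_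
      rw [entPair_tmul]; ring
  | add x y hx hy =>
      have : S.act (1:A) (x + y) c = S.act 1 x c + S.act 1 y c := by rw [hS, hS, hS, mul_add, add_mul]
      rw [this, map_add, hx, hy, ← Finset.sum_add_distrib]
      refine Finset.sum_congr rfl fun p _ => ?_
      rw [map_add]; ring

lemma entPair_star_left (i j l m : Fin n) (b : A) (d : A ⊗[k] A) :
    entPair X i j l m (S.star b d 1) = ∑ p, X b i p * entPair X p j l m d := by
  induction d using TensorProduct.induction_on with
  | zero =>
      have : S.star b (0 : A ⊗[k] A) 1 = 0 := by rw [BimodOn.star]; rw [map_zero, hS]; simp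
      simp [this]
  | tmul u v =>
      rw [star_tmul hS, mul_one, entPair_tmul, map_mul]
      rw [Matrix.mul_apply, Finset.sum_mul]
      refine Finset.sum_congr rfl fun p _ => ?_
      rw [entPair_tmul]; ring
  | add x y hx hy =>
      have : S.star b (x + y) 1 = S.star b x 1 + S.star b y 1 := by
        rw [BimodOn.star, BimodOn.star, BimodOn.star, map_add, hS, hS, hS, mul_add, add_mul, map_add]
      rw [this, map_add, hx, hy, ← Finset.sum_add_distrib]
      refine Finset.sum_congr rfl fun p _ => ?_
      rw [map_add]; ring

lemma entPair_star_right (i j l m : Fin n) (c : A) (d : A ⊗[k] A) :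
    entPair X i j l m (S.star 1 d c) = ∑ p, entPair X i p l m d * X c p j := by
  induction d using TensorProduct.induction_on with
  | zero =>
      have : S.star (1:A) (0 : A ⊗[k] A) c = 0 := by rw [BimodOn.star]; rw [map_zero, hS]; simp
      simp [this]
  | tmul u v =>
      rw [star_tmul hS, one_mul, entPair_tmul, map_mul]
      rw [Matrix.mul_apply, Finset.sum_mul]
      refine Finset.sum_congr rfl fun p _ => ?_
      rw [entPair_tmul]; ring
  | add x y hx hy =>
      have : S.star (1:A) (x + y) c = S.star 1 x c + S.star 1 y c := by
        rw [BimodOn.star, BimodOn.star, BimodOn.star, map_add, hS, hS, hS, mul_add, add_mul, map_add]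
      rw [this, map_add, hx, hy, ← Finset.sum_add_distrib]
      refine Finset.sum_congr rfl fun p _ => ?_
      rw [map_add]; ring

lemma act_one_one' (d : A ⊗[k] A) : S.act 1 d 1 = d := by
  rw [hS]; rw [Algebra.TensorProduct.one_def.symm]; simp

lemma star_one_one' (d : A ⊗[k] A) : S.star 1 d 1 = d := by
  rw [BimodOn.star, act_one_one' hS]
  induction d using TensorProduct.induction_on with
  | zero => simp
  | tmul u v => rfl
  | add x y hx hy => rw [map_add, map_add, hx, hy]

lemma br_one_right (D : DoubleBracket S) (a : A) : D.br a 1 = 0 := by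
  have h := D.leibniz_right a 1 1
  rw [mul_one, act_one_one' hS] at h
  exact right_eq_add.mp h

lemma br_one_left (D : DoubleBracket S) (a : A) : D.br 1 a = 0 := by
  have h := D.leibniz_left a 1 1
  rw [mul_one, star_one_one' hS] at h
  exact right_eq_add.mp h

end Helpers2
section Helpers3
variable {k A R : Type*} [Field k] [Ring A] [Algebra k A]
    [CommRing R] [Algebra k R] {n : ℕ}

/-- `(u⊗v)⊗w ↦ u_{ij} v_{lm} w_{pq}`. -/
noncomputable def triEnt (X : A →ₐ[k] Matrix (Fin n) (Fin n) R) (i j l m p q : Fin n) :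
    (A ⊗[k] A) ⊗[k] A →ₗ[k] R :=
  TensorProduct.lift ((LinearMap.mul k R).compl₁₂ (entPair X i j l m)
    ((matEntry p q).comp X.toLinearMap))

variable (X : A →ₐ[k] Matrix (Fin n) (Fin n) R)

lemma triEnt_tmul (i j l m p q : Fin n) (d : A ⊗[k] A) (w : A) :
    triEnt X i j l m p q (d ⊗ₜ[k] w) = entPair X i j l m d * X w p q := rfl

lemma triEnt_tau123 (i j l m p q : Fin n) (T : (A ⊗[k] A) ⊗[k] A) :
    triEnt X i j l m p q (tau123 k A T) = triEnt X l m p q i j T := by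
  induction T using TensorProduct.induction_on with
  | zero => simp
  | add x y hx hy => rw [map_add, map_add, map_add, hx, hy]
  | tmul d w =>
    induction d using TensorProduct.induction_on with
    | zero => simp
    | add x y hx hy =>
        rw [TensorProduct.add_tmul, map_add, map_add, map_add, hx, hy]
    | tmul u v =>
        have : tau123 k A ((u ⊗ₜ[k] v) ⊗ₜ[k] w) = (w ⊗ₜ[k] u) ⊗ₜ[k] v := by
          simp [tau123]
        rw [this, triEnt_tmul, triEnt_tmul, entPair_tmul, entPair_tmul]; ring

lemma triEnt_tau132 (i j l m p q : Fin n) (T : (A ⊗[k] A) ⊗[k] A) :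
    triEnt X i j l m p q (tau132 k A T) = triEnt X p q i j l m T := by
  induction T using TensorProduct.induction_on with
  | zero => simp
  | add x y hx hy => rw [map_add, map_add, map_add, hx, hy]
  | tmul d w =>
    induction d using TensorProduct.induction_on with
    | zero => simp
    | add x y hx hy =>
        rw [TensorProduct.add_tmul, map_add, map_add, map_add, hx, hy]
    | tmul u v =>
        have : tau132 k A ((u ⊗ₜ[k] v) ⊗ₜ[k] w) = (v ⊗ₜ[k] w) ⊗ₜ[k] u := by
          simp [tau132]
        rw [this, triEnt_tmul, triEnt_tmul, entPair_tmul, entPair_tmul]; ring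

lemma triEnt_tau12 (i j l m p q : Fin n) (T : (A ⊗[k] A) ⊗[k] A) :
    triEnt X i j l m p q (tau12 k A T) = triEnt X l m i j p q T := by
  induction T using TensorProduct.induction_on with
  | zero => simp
  | add x y hx hy => rw [map_add, map_add, map_add, hx, hy]
  | tmul d w =>
    induction d using TensorProduct.induction_on with
    | zero => simp
    | add x y hx hy =>
        rw [TensorProduct.add_tmul, map_add, map_add, map_add, hx, hy]
    | tmul u v =>
        have : tau12 k A ((u ⊗ₜ[k] v) ⊗ₜ[k] w) = (v ⊗ₜ[k] u) ⊗ₜ[k] w := by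
          simp [tau12]
        rw [this, triEnt_tmul, triEnt_tmul, entPair_tmul, entPair_tmul]; ring

lemma tau123_tau123 (T : (A ⊗[k] A) ⊗[k] A) :
    tau123 k A (tau123 k A T) = tau132 k A T := by
  induction T using TensorProduct.induction_on with
  | zero => simp
  | add x y hx hy => rw [map_add, map_add, map_add, hx, hy]
  | tmul d w =>
    induction d using TensorProduct.induction_on with
    | zero => simp
    | add x y hx hy =>
        rw [TensorProduct.add_tmul, map_add, map_add, map_add, hx, hy]
    | tmul u v => simp [tau123, tau132]

lemma tau123_tau132 (T : (A ⊗[k] A) ⊗[k] A) :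
    tau123 k A (tau132 k A T) = T := by
  induction T using TensorProduct.induction_on with
  | zero => simp
  | add x y hx hy => rw [map_add, map_add, hx, hy]
  | tmul d w =>
    induction d using TensorProduct.induction_on with
    | zero => simp
    | add x y hx hy =>
        rw [TensorProduct.add_tmul, map_add, map_add, hx, hy]
    | tmul u v => simp [tau123, tau132]

lemma trL_tmul (br : A →ₗ[k] A →ₗ[k] A ⊗[k] A) (a u v : A) :
    trL br a (u ⊗ₜ[k] v) = br a u ⊗ₜ[k] v := rfl

lemma jac_cyc (br : A →ₗ[k] A →ₗ[k] A ⊗[k] A) (a b c : A) :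
    jac br c a b = tau123 k A (jac br a b c) := by
  rw [jac, jac, map_add, map_add, tau123_tau123, tau123_tau132]
  abel

/-- swap of a bracket value, via antisymmetry. -/
lemma swap_br {S : BimodStr k A} (D : DoubleBracket S) (b c : A) :
    swapT k A (D.br b c) = - D.br c b := by
  rw [D.antisymm b c, map_neg]
  have : ∀ d : A ⊗[k] A, swapT k A (swapT k A d) = d := by
    intro d
    induction d using TensorProduct.induction_on with
    | zero => simp
    | tmul u v => rfl
    | add x y hx hy => rw [map_add, map_add, hx, hy]
  rw [this]

end Helpers3
section Helpers4
universe v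
variable {k A R : Type v} [Field k] [Ring A] [Algebra k A]
    [CommRing R] [Algebra k R] {n : ℕ}
variable (X : A →ₐ[k] Matrix (Fin n) (Fin n) R)

/-- Two Leibniz linear maps agreeing on a generating set are equal. -/
lemma derivext {s : Set R} (htop : Algebra.adjoin k s = ⊤) (f g : R →ₗ[k] R)
    (hf : ∀ y z : R, f (y * z) = y * f z + f y * z)
    (hg : ∀ y z : R, g (y * z) = y * g z + g y * z)
    (h : ∀ x ∈ s, f x = g x) : f = g := by
  have f1 : f 1 = 0 := by
    have := hf 1 1; rw [mul_one, one_mul, mul_one] at this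
    exact (right_eq_add.mp this)
  have g1 : g 1 = 0 := by
    have := hg 1 1; rw [mul_one, one_mul, mul_one] at this
    exact (right_eq_add.mp this)
  ext x
  have hx : x ∈ Algebra.adjoin k s := htop ▸ Algebra.mem_top
  induction hx using Algebra.adjoin_induction with
  | mem x hxs => exact h x hxs
  | algebraMap r =>
      rw [Algebra.algebraMap_eq_smul_one, map_smul, map_smul, f1, g1]
  | add x y hx hy hfx hfy => rw [map_add, map_add, hfx, hfy]
  | mul x y hx hy hfx hfy => rw [hf, hg, hfx, hfy]

theorem gen_top
    (hUniv : ∀ (C : Type v) [CommRing C] [Algebra k C]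
      (ρ : A →ₐ[k] Matrix (Fin n) (Fin n) C),
      ∃! g : R →ₐ[k] C, ∀ (a : A) (i j : Fin n), g (X a i j) = ρ a i j) :
    Algebra.adjoin k (Set.range fun t : A × Fin n × Fin n => X t.1 t.2.1 t.2.2) = ⊤ := by
  set s := Set.range fun t : A × Fin n × Fin n => X t.1 t.2.1 t.2.2 with hs
  set T := Algebra.adjoin k s with hT
  have hmem : ∀ (a : A) (i j : Fin n), X a i j ∈ T :=
    fun a i j => Algebra.subset_adjoin ⟨(a, i, j), rfl⟩
  -- linear map into matrices over T
  let L : A →ₗ[k] Matrix (Fin n) (Fin n) T :=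
    { toFun := fun a => Matrix.of fun i j => (⟨X a i j, hmem a i j⟩ : T)
      map_add' := by
        intro a b; ext i j
        simp [Matrix.add_apply]
      map_smul' := by
        intro c a; ext i j
        simp [Matrix.smul_apply] }
  have hL : ∀ (a : A) (i j : Fin n), (L a i j : R) = X a i j := fun a i j => rfl
  let ρ : A →ₐ[k] Matrix (Fin n) (Fin n) T := AlgHom.ofLinearMap L
    (by
      ext i j
      rw [hL]
      by_cases hij : i = j <;> simp [Matrix.one_apply, hij])
    (by
      intro a b
      ext i j
      rw [hL, map_mul, Matrix.mul_apply, Matrix.mul_apply]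
      push_cast
      exact Finset.sum_congr rfl fun p _ => rfl)
  obtain ⟨g, hg, -⟩ := hUniv T ρ
  obtain ⟨g₀, -, hu⟩ := hUniv R X
  have h1 : T.val.comp g = AlgHom.id k R := by
    have e1 : T.val.comp g = g₀ := hu _ (fun a i j => by
      simp only [AlgHom.comp_apply, hg]
      exact hL a i j)
    have e2 : AlgHom.id k R = g₀ := hu _ (fun a i j => rfl)
    rw [e1, e2]
  rw [hT, eq_top_iff]
  intro x _
  have : T.val (g x) = x := by
    have := congrArg (fun h : R →ₐ[k] R => h x) h1
    simpa using this
  rw [← this]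
  exact (g x).2

end Helpers4
section Helpers5
universe v
variable {k A R : Type v} [Field k] [Ring A] [Algebra k A]
    [CommRing R] [Algebra k R] {n : ℕ}
variable (X : A →ₐ[k] Matrix (Fin n) (Fin n) R)

theorem trivsq_lift {M : Type v} [AddCommGroup M] [Module k M] [Module R M] [Module Rᵐᵒᵖ M]
    [SMulCommClass R Rᵐᵒᵖ M] [IsCentralScalar R M] [IsScalarTower k R M]
    (hUniv : ∀ (C : Type v) [CommRing C] [Algebra k C]
      (ρ : A →ₐ[k] Matrix (Fin n) (Fin n) C),
      ∃! g : R →ₐ[k] C, ∀ (a : A) (i j : Fin n), g (X a i j) = ρ a i j)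
    (w : A →ₗ[k] Matrix (Fin n) (Fin n) M)
    (hw1 : w 1 = 0)
    (hwmul : ∀ (a b : A) (i j : Fin n), w (a * b) i j
        = ∑ p, (X a i p • w b p j + X b p j • w a i p)) :
    ∃ Δ : R →ₗ[k] M, (∀ (a : A) (i j : Fin n), Δ (X a i j) = w a i j) ∧
      ∀ x y : R, Δ (x * y) = x • Δ y + y • Δ x := by
  classical
  let C := TrivSqZeroExt R M
  let L : A →ₗ[k] Matrix (Fin n) (Fin n) C :=
    { toFun := fun a => Matrix.of fun i j => ((X a i j, w a i j) : C)
      map_add' := by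
        intro a b; ext i j <;>
          first
          | (simp only [map_add, Matrix.add_apply, Matrix.of_apply]; rfl)
          | rfl
      map_smul' := by
        intro c a; ext i j <;>
          first
          | (simp only [map_smul, Matrix.smul_apply, Matrix.of_apply, RingHom.id_apply]; rfl)
          | rfl }
  have hLfst : ∀ (a : A) (i j : Fin n), (L a i j).fst = X a i j := fun _ _ _ => rfl
  have hLsnd : ∀ (a : A) (i j : Fin n), (L a i j).snd = w a i j := fun _ _ _ => rfl
  let ρ : A →ₐ[k] Matrix (Fin n) (Fin n) C := AlgHom.ofLinearMap L
    (by
      ext i j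
      · rw [show TrivSqZeroExt.fst (L 1 i j) = X 1 i j from rfl, map_one]
        by_cases hij : i = j <;>
          simp [Matrix.one_apply, hij, TrivSqZeroExt.fst_one, TrivSqZeroExt.fst_zero]
      · rw [show TrivSqZeroExt.snd (L 1 i j) = w 1 i j from rfl, hw1]
        by_cases hij : i = j <;>
          simp [Matrix.one_apply, hij, TrivSqZeroExt.snd_one, TrivSqZeroExt.snd_zero])
    (by
      intro a b
      ext i j
      · rw [Matrix.mul_apply, show TrivSqZeroExt.fst (L (a*b) i j) = X (a*b) i j from rfl,
          map_mul, Matrix.mul_apply, TrivSqZeroExt.fst_sum]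
        exact Finset.sum_congr rfl fun p _ => by
          rw [TrivSqZeroExt.fst_mul, hLfst, hLfst]
      · rw [Matrix.mul_apply, show TrivSqZeroExt.snd (L (a*b) i j) = w (a*b) i j from rfl,
          hwmul, TrivSqZeroExt.snd_sum]
        refine Finset.sum_congr rfl fun p _ => ?_
        rw [TrivSqZeroExt.snd_mul, hLfst, hLfst, hLsnd, hLsnd, op_smul_eq_smul])
  obtain ⟨g, hg, -⟩ := hUniv C ρ
  obtain ⟨g₀, -, hu⟩ := hUniv R X
  have hfst : ∀ x : R, (g x).fst = x := by
    have e1 : (TrivSqZeroExt.fstHom k R M).comp g = g₀ := hu _ (fun a i j => by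
      simp only [AlgHom.comp_apply, hg]
      exact hLfst a i j)
    have e2 : AlgHom.id k R = g₀ := hu _ (fun a i j => rfl)
    intro x
    have := congrArg (fun h : R →ₐ[k] R => h x) (e1.trans e2.symm)
    simpa using this
  refine ⟨((TrivSqZeroExt.sndHom R M).restrictScalars k).comp g.toLinearMap, ?_, ?_⟩
  · intro a i j
    simp only [LinearMap.comp_apply, LinearMap.coe_restrictScalars, AlgHom.toLinearMap_apply,
      TrivSqZeroExt.sndHom_apply, hg]
    exact hLsnd a i j
  · intro x y
    simp only [LinearMap.comp_apply, LinearMap.coe_restrictScalars, AlgHom.toLinearMap_apply,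
      TrivSqZeroExt.sndHom_apply, map_mul]
    rw [TrivSqZeroExt.snd_mul, op_smul_eq_smul, hfst, hfst]

end Helpers5
/-- Proposition `Rep-twR` and Theorem `Rep-Right-Lie`: a double
`(12)`-weak Poisson bracket associated with the right bimodule structure induces, on the
coordinate ring `k[Rep(A,n)]` (here modelled by a commutative algebra `R` with the
universal matrix representation `X` of `A`), a unique antisymmetric biderivation with
`{a_{ij}, b_{kl}} = ⟪a,b⟫'_{ij} ⟪a,b⟫''_{kl}`; it is a Poisson bracket and restricts to
the subalgebra of trace functions. -/
theorem right_weak_poisson_induces_poisson_on_rep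
    {k A R : Type u} [Field k] [CharZero k] [Ring A] [Algebra k A]
    [CommRing R] [Algebra k R]
    (hfg : ∃ s : Finset A, Algebra.adjoin k (s : Set A) = ⊤)
    (n : ℕ) (hn : 1 ≤ n)
    (S : BimodStr k A)
    (hS : ∀ (a b : A) (d : A ⊗[k] A),
      S.act a d b = ((1 : A) ⊗ₜ[k] a) * d * ((1 : A) ⊗ₜ[k] b))
    (D : DoubleBracket S)
    (hwk : ∀ a b c : A, jac D.br a b c = tau12 k A (jac D.br b a c))
    (X : A →ₐ[k] Matrix (Fin n) (Fin n) R)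
    -- `R` represents the functor `B ↦ Hom(A, Mat_n(B))`, i.e. `R = k[Rep(A,n)]`.
    (hUniv : ∀ (C : Type u) [CommRing C] [Algebra k C]
      (ρ : A →ₐ[k] Matrix (Fin n) (Fin n) C),
      ∃! g : R →ₐ[k] C, ∀ (a : A) (i j : Fin n), g (X a i j) = ρ a i j) :
    ∃ P : R →ₗ[k] R →ₗ[k] R,
      (∀ x y : R, P x y = - P y x) ∧
      (∀ x y z : R, P x (y * z) = y * P x z + P x y * z) ∧
      (∀ x y z : R, P (x * y) z = x * P y z + y * P x z) ∧
      (∀ (a b : A) (i j l m : Fin n),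
        P (X a i j) (X b l m) = entPair X i j l m (D.br a b)) ∧
      (∀ x y z : R, P x (P y z) + P y (P z x) + P z (P x y) = 0) ∧
      (∀ x ∈ Algebra.adjoin k (Set.range fun a : A => ∑ i : Fin n, X a i i),
       ∀ y ∈ Algebra.adjoin k (Set.range fun a : A => ∑ i : Fin n, X a i i),
        P x y ∈ Algebra.adjoin k (Set.range fun a : A => ∑ i : Fin n, X a i i)) ∧
      (∀ P' : R →ₗ[k] R →ₗ[k] R,
        (∀ x y : R, P' x y = - P' y x) →
        (∀ x y z : R, P' x (y * z) = y * P' x z + P' x y * z) →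
        (∀ x y z : R, P' (x * y) z = x * P' y z + y * P' x z) →
        (∀ (a b : A) (i j l m : Fin n),
          P' (X a i j) (X b l m) = entPair X i j l m (D.br a b)) →
        P' = P) := by
  classical
  clear hfg hn
  have htop := gen_top X hUniv
  -- ==================== Stage A : one derivation per generator ====================
  have stageA : ∀ (a : A) (i j : Fin n), ∃ δ : R →ₗ[k] R,
      (∀ (b : A) (l m : Fin n), δ (X b l m) = entPair X i j l m (D.br a b)) ∧
      ∀ x y : R, δ (x * y) = x * δ y + y * δ x := by
    intro a i j
    let w : A →ₗ[k] Matrix (Fin n) (Fin n) R :=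
      { toFun := fun b => Matrix.of fun l m => entPair X i j l m (D.br a b)
        map_add' := by intro b c; ext l m; simp [Matrix.add_apply]
        map_smul' := by intro c b; ext l m; simp [Matrix.smul_apply] }
    have hw1 : w 1 = 0 := by
      ext l m
      show entPair X i j l m (D.br a 1) = 0
      rw [br_one_right hS D a, map_zero]
    have hwmul : ∀ (b c : A) (l m : Fin n), w (b * c) l m
        = ∑ p, (X b l p • w c p m + X c p m • w b l p) := by
      intro b c l m
      show entPair X i j l m (D.br a (b * c)) = _
      rw [D.leibniz_right a b c, map_add, entPair_act_left X hS, entPair_act_right X hS,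
        ← Finset.sum_add_distrib]
      refine Finset.sum_congr rfl fun p _ => ?_
      show X b l p * entPair X i j p m (D.br a c)
          + entPair X i j l p (D.br a b) * X c p m
        = X b l p • (w c p m) + X c p m • (w b l p)
      show _ = X b l p * entPair X i j p m (D.br a c)
          + X c p m * entPair X i j l p (D.br a b)
      ring
    obtain ⟨Δ, hΔ1, hΔ2⟩ := trivsq_lift X hUniv w hw1 hwmul
    exact ⟨Δ, fun b l m => hΔ1 b l m, fun x y => by
      rw [hΔ2, smul_eq_mul, smul_eq_mul]⟩
  choose δ hδval hδmul using stageA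
  -- basic properties of δ, proved by extensionality over generators
  have leib0 : ∀ y z : R, (0 : R →ₗ[k] R) (y * z) = y * (0 : R →ₗ[k] R) z
      + (0 : R →ₗ[k] R) y * z := by intro y z; simp
  have hδleib : ∀ (a : A) (i j : Fin n) (y z : R),
      δ a i j (y * z) = y * δ a i j z + δ a i j y * z := by
    intro a i j y z; rw [hδmul a i j y z]; ring
  have hδ_one : ∀ i j : Fin n, δ 1 i j = 0 := by
    intro i j
    refine derivext htop _ _ (hδleib 1 i j) leib0 ?_
    rintro x ⟨⟨b, l, m⟩, rfl⟩
    rw [hδval, br_one_left hS D b, map_zero, LinearMap.zero_apply]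
  have hδ_add : ∀ (a b : A) (i j : Fin n), δ (a + b) i j = δ a i j + δ b i j := by
    intro a b i j
    refine derivext htop _ _ (hδleib (a + b) i j) ?_ ?_
    · intro y z
      simp only [LinearMap.add_apply, hδleib]; ring
    · rintro x ⟨⟨c, l, m⟩, rfl⟩
      simp only [LinearMap.add_apply, hδval, map_add, LinearMap.add_apply]
  have hδ_smul : ∀ (c : k) (a : A) (i j : Fin n), δ (c • a) i j = c • δ a i j := by
    intro c a i j
    refine derivext htop _ _ (hδleib (c • a) i j) ?_ ?_
    · intro y z
      simp only [LinearMap.smul_apply, hδleib, smul_add, mul_smul_comm, smul_mul_assoc]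
    · rintro x ⟨⟨b, l, m⟩, rfl⟩
      rw [hδval, LinearMap.smul_apply, hδval, map_smul, LinearMap.smul_apply, map_smul]
  have hδ_mulA : ∀ (a b : A) (i j : Fin n),
      δ (a * b) i j = ∑ p, (X a i p • δ b p j + X b p j • δ a i p) := by
    intro a b i j
    refine derivext htop _ _ (hδleib (a * b) i j) ?_ ?_
    · intro y z
      simp only [LinearMap.sum_apply, LinearMap.add_apply, LinearMap.smul_apply,
        smul_eq_mul, hδleib]
      rw [Finset.mul_sum, Finset.sum_mul, ← Finset.sum_add_distrib]
      refine Finset.sum_congr rfl fun p _ => by ring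
    · rintro x ⟨⟨c, l, m⟩, rfl⟩
      rw [hδval]
      have : D.br (a * b) c = S.star a (D.br b c) 1 + S.star 1 (D.br a c) b :=
        D.leibniz_left c a b
      rw [this, map_add, entPair_star_left X hS, entPair_star_right X hS]
      rw [LinearMap.sum_apply, ← Finset.sum_add_distrib]
      refine Finset.sum_congr rfl fun p _ => ?_
      simp only [LinearMap.add_apply, LinearMap.smul_apply, smul_eq_mul, hδval]
      ring
  -- ==================== Stage B : assemble into a biderivation ====================
  let w2 : A →ₗ[k] Matrix (Fin n) (Fin n) (R →ₗ[k] R) :=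
    { toFun := fun a => Matrix.of fun i j => δ a i j
      map_add' := by intro a b; ext1 i j; exact hδ_add a b i j
      map_smul' := by intro c a; ext1 i j; exact hδ_smul c a i j }
  have hw2mul : ∀ (a b : A) (i j : Fin n), w2 (a * b) i j
      = ∑ p, (X a i p • w2 b p j + X b p j • w2 a i p) := fun a b i j => hδ_mulA a b i j
  have hw21 : w2 1 = 0 := by ext1 i j; exact hδ_one i j
  obtain ⟨P, hPval, hPmul⟩ := trivsq_lift X hUniv w2 hw21 hw2mul
  have hPgenval : ∀ (a : A) (i j : Fin n), P (X a i j) = δ a i j := fun a i j => hPval a i j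
  -- first-slot Leibniz
  have hP_left : ∀ x y z : R, P (x * y) z = x * P y z + y * P x z := by
    intro x y z
    rw [hPmul]
    simp [LinearMap.smul_apply, smul_eq_mul]
  -- P 1 = 0 and second-slot Leibniz
  have hP_one : P 1 = 0 := by
    have h := hPmul 1 1
    simp only [mul_one, one_smul] at h
    exact right_eq_add.mp h
  have hP_x_one : ∀ x : R, P x 1 = 0 := by
    intro x
    have hx : x ∈ Algebra.adjoin k
        (Set.range fun t : A × Fin n × Fin n => X t.1 t.2.1 t.2.2) :=
      htop ▸ Algebra.mem_top
    induction hx using Algebra.adjoin_induction with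
    | mem x hxs =>
        obtain ⟨⟨a, i, j⟩, rfl⟩ := hxs
        rw [hPgenval]
        have := hδmul a i j 1 1
        simp only [mul_one, one_mul] at this
        exact right_eq_add.mp this
    | algebraMap r =>
        rw [Algebra.algebraMap_eq_smul_one, map_smul, hP_one]; simp
    | add x y hx hy ihx ihy => rw [map_add, LinearMap.add_apply, ihx, ihy, add_zero]
    | mul x y hx hy ihx ihy => rw [hP_left, ihx, ihy]; ring
  have hP_right : ∀ x y z : R, P x (y * z) = y * P x z + P x y * z := by
    intro x
    have hx : x ∈ Algebra.adjoin k
        (Set.range fun t : A × Fin n × Fin n => X t.1 t.2.1 t.2.2) :=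
      htop ▸ Algebra.mem_top
    induction hx using Algebra.adjoin_induction with
    | mem x hxs =>
        obtain ⟨⟨a, i, j⟩, rfl⟩ := hxs
        intro y z
        rw [hPgenval]
        rw [hδmul a i j y z]; ring
    | algebraMap r =>
        intro y z
        rw [Algebra.algebraMap_eq_smul_one, map_smul, hP_one]; simp
    | add x x' hx hx' ihx ihx' =>
        intro y z
        rw [map_add]
        simp only [LinearMap.add_apply]
        rw [ihx, ihx']; ring
    | mul x x' hx hx' ihx ihx' =>
        intro y z
        rw [hP_left, hP_left, hP_left, ihx, ihx']; ring
  -- values on pairs of generators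
  have hPgen : ∀ (a b : A) (i j l m : Fin n),
      P (X a i j) (X b l m) = entPair X i j l m (D.br a b) := by
    intro a b i j l m
    rw [hPgenval, hδval]
  -- ==================== antisymmetry ====================
  have hP_anti_gen : ∀ (a : A) (i j : Fin n) (y : R),
      P (X a i j) y = - P y (X a i j) := by
    intro a i j
    have : P (X a i j) = - P.flip (X a i j) := by
      refine derivext htop _ _ ?_ ?_ ?_
      · intro y z; exact hP_right _ y z
      · intro y z
        simp only [LinearMap.neg_apply, LinearMap.flip_apply]
        rw [hP_left y z (X a i j)]; ring
      · rintro x ⟨⟨b, l, m⟩, rfl⟩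
        simp only [LinearMap.neg_apply, LinearMap.flip_apply]
        rw [hPgen, hPgen, D.antisymm a b, map_neg, entPair_swap]
    intro y
    rw [this]; simp
  have hP_anti : ∀ x y : R, P x y = - P y x := by
    intro x y
    have : P.flip y = - P y := by
      refine derivext htop _ _ ?_ ?_ ?_
      · intro z w
        simp only [LinearMap.flip_apply]
        rw [hP_left z w y]; ring
      · intro z w
        simp only [LinearMap.neg_apply]
        rw [hP_right y z w]; ring
      · rintro x ⟨⟨a, i, j⟩, rfl⟩
        simp only [LinearMap.flip_apply, LinearMap.neg_apply]
        exact hP_anti_gen a i j y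
    have := congrArg (fun f : R →ₗ[k] R => f x) this
    simpa using this
  -- ==================== Jacobi identity ====================
  -- the key exchange lemma for `P` against `entPair`
  have hPE : ∀ (a : A) (i j l m p q : Fin n) (d : A ⊗[k] A),
      P (X a i j) (entPair X l m p q d)
        = triEnt X i j l m p q (trL D.br a d)
          + triEnt X i j p q l m (trL D.br a (swapT k A d)) := by
    intro a i j l m p q d
    induction d using TensorProduct.induction_on with
    | zero => simp
    | tmul u v =>
        rw [entPair_tmul, hP_right, hPgen, hPgen, swapT_tmul, trL_tmul, trL_tmul,
          triEnt_tmul, triEnt_tmul]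
        ring
    | add x y hx hy =>
        simp only [map_add, hx, hy]; ring
  -- Jacobiator vanishes on triples of generators
  have hJgen : ∀ (a b c : A) (i j l m p q : Fin n),
      P (X a i j) (P (X b l m) (X c p q))
        + P (X b l m) (P (X c p q) (X a i j))
        + P (X c p q) (P (X a i j) (X b l m)) = 0 := by
    intro a b c i j l m p q
    rw [hPgen b c l m p q, hPgen c a p q i j, hPgen a b i j l m]
    rw [hPE a i j l m p q, hPE b l m p q i j, hPE c p q i j l m]
    rw [swap_br D b c, swap_br D c a, swap_br D a b]
    simp only [map_neg]
    have hplus : triEnt X i j l m p q (jac D.br a b c)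
        = triEnt X i j l m p q (trL D.br a (D.br b c))
          + triEnt X l m p q i j (trL D.br b (D.br c a))
          + triEnt X p q i j l m (trL D.br c (D.br a b)) := by
      rw [jac, map_add, map_add, triEnt_tau123, triEnt_tau132]
    have hminus : triEnt X i j p q l m (jac D.br a c b)
        = triEnt X i j p q l m (trL D.br a (D.br c b))
          + triEnt X p q l m i j (trL D.br c (D.br b a))
          + triEnt X l m i j p q (trL D.br b (D.br a c)) := by
      rw [jac, map_add, map_add, triEnt_tau123, triEnt_tau132]
    have hkey : triEnt X i j p q l m (jac D.br a c b)
        = triEnt X i j l m p q (jac D.br a b c) := by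
      rw [hwk a c b, triEnt_tau12, jac_cyc D.br a b c, triEnt_tau123]
    have := hkey
    rw [hminus, hplus] at this
    linear_combination this.symm
  -- package the Jacobiator as a linear map in the last slot
  have hJleib : ∀ x y z w : R,
      (P x (P y (z * w)) + P y (P (z * w) x) + P (z * w) (P x y))
        = z * (P x (P y w) + P y (P w x) + P w (P x y))
          + (P x (P y z) + P y (P z x) + P z (P x y)) * w := by
    intro x y z w
    rw [hP_right y z w, hP_left z w x, hP_left z w (P x y), map_add, map_add,
      hP_right x z (P y w), hP_right x (P y z) w, hP_right y z (P w x),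
      hP_right y w (P z x), hP_anti w x, hP_anti z x]
    simp only [map_neg]
    ring
  have hJlin : ∀ x y : R, ∃ f : R →ₗ[k] R,
      (∀ z : R, f z = P x (P y z) + P y (P z x) + P z (P x y)) ∧
      (∀ z w : R, f (z * w) = z * f w + f z * w) := by
    intro x y
    refine ⟨(P x).comp (P y) + (P y).comp (P.flip x) + P.flip (P x y), fun z => by
      simp [LinearMap.add_apply, LinearMap.comp_apply, LinearMap.flip_apply], ?_⟩
    intro z w
    simp only [LinearMap.add_apply, LinearMap.comp_apply, LinearMap.flip_apply]
    exact hJleib x y z w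
  -- vanishing of the Jacobiator, in three extension steps
  have hJ1 : ∀ (a : A) (i j : Fin n) (b : A) (l m : Fin n) (z : R),
      P (X a i j) (P (X b l m) z) + P (X b l m) (P z (X a i j))
        + P z (P (X a i j) (X b l m)) = 0 := by
    intro a i j b l m
    obtain ⟨f, hfval, hfleib⟩ := hJlin (X a i j) (X b l m)
    have : f = 0 := by
      refine derivext htop _ _ (fun y z => hfleib y z) leib0 ?_
      rintro x ⟨⟨c, p, q⟩, rfl⟩
      rw [hfval, LinearMap.zero_apply]
      exact hJgen a b c i j l m p q
    intro z
    rw [← hfval z, this, LinearMap.zero_apply]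
  have hJ2 : ∀ (a : A) (i j : Fin n) (y z : R),
      P (X a i j) (P y z) + P y (P z (X a i j)) + P z (P (X a i j) y) = 0 := by
    intro a i j y z
    obtain ⟨f, hfval, hfleib⟩ := hJlin z (X a i j)
    have hf0 : f = 0 := by
      refine derivext htop _ _ (fun u v => hfleib u v) leib0 ?_
      rintro x ⟨⟨b, l, m⟩, rfl⟩
      rw [hfval, LinearMap.zero_apply]
      have := hJ1 a i j b l m z
      linear_combination this
    have := congrArg (fun g : R →ₗ[k] R => g y) hf0
    simp only [LinearMap.zero_apply] at this
    rw [hfval y] at this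
    linear_combination this
  have hJac : ∀ x y z : R, P x (P y z) + P y (P z x) + P z (P x y) = 0 := by
    intro x y z
    obtain ⟨f, hfval, hfleib⟩ := hJlin y z
    have hf0 : f = 0 := by
      refine derivext htop _ _ (fun u v => hfleib u v) leib0 ?_
      rintro x ⟨⟨a, i, j⟩, rfl⟩
      rw [hfval, LinearMap.zero_apply]
      have := hJ2 a i j y z
      linear_combination this
    have := congrArg (fun g : R →ₗ[k] R => g x) hf0
    simp only [LinearMap.zero_apply] at this
    rw [hfval x] at this
    linear_combination this
  -- ==================== trace subalgebra ====================
  have htr : ∀ x ∈ Algebra.adjoin k (Set.range fun a : A => ∑ i : Fin n, X a i i),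
      ∀ y ∈ Algebra.adjoin k (Set.range fun a : A => ∑ i : Fin n, X a i i),
      P x y ∈ Algebra.adjoin k (Set.range fun a : A => ∑ i : Fin n, X a i i) := by
    have hcore : ∀ a b : A, P (∑ i, X a i i) (∑ j, X b j j)
        ∈ Algebra.adjoin k (Set.range fun a : A => ∑ i : Fin n, X a i i) := by
      intro a b
      have hexp : P (∑ i, X a i i) (∑ j, X b j j)
          = ∑ i, ∑ j, entPair X i i j j (D.br a b) := by
        rw [map_sum]
        have hrow : ∀ x : Fin n, P (∑ i, X a i i) (X b x x)
            = ∑ i, entPair X i i x x (D.br a b) := by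
          intro x
          have h1 : P (∑ i, X a i i) = ∑ i, P (X a i i) := map_sum P _ _
          rw [h1, LinearMap.coe_sum, Finset.sum_apply]
          exact Finset.sum_congr rfl fun i _ => hPgen a b i i x x
        rw [Finset.sum_congr rfl fun x _ => hrow x, Finset.sum_comm]
      rw [hexp]
      have hmem : ∀ d : A ⊗[k] A, (∑ i, ∑ j, entPair X i i j j d)
          ∈ Algebra.adjoin k (Set.range fun a : A => ∑ i : Fin n, X a i i) := by
        intro d
        induction d using TensorProduct.induction_on with
        | zero => simp only [map_zero, Finset.sum_const_zero]; exact zero_mem _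
        | tmul u v =>
            have he : (∑ i, ∑ j, entPair X i i j j (u ⊗ₜ[k] v))
                = (∑ i, X u i i) * (∑ j, X v j j) := by
              rw [Finset.sum_mul_sum]
              exact Finset.sum_congr rfl fun i _ => Finset.sum_congr rfl fun j _ =>
                (entPair_tmul X i i j j u v)
            rw [he]
            exact mul_mem (Algebra.subset_adjoin ⟨u, rfl⟩)
              (Algebra.subset_adjoin ⟨v, rfl⟩)
        | add x y hx hy =>
            simp only [map_add, Finset.sum_add_distrib]
            exact add_mem hx hy
      exact hmem (D.br a b)
    intro x hx
    induction hx using Algebra.adjoin_induction with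
    | mem x hxs =>
        intro y hy
        induction hy using Algebra.adjoin_induction with
        | mem y hys =>
            obtain ⟨a, rfl⟩ := hxs
            obtain ⟨b, rfl⟩ := hys
            exact hcore a b
        | algebraMap r =>
            rw [Algebra.algebraMap_eq_smul_one, map_smul, hP_x_one, smul_zero]
            exact zero_mem _
        | add y z hy hz ihy ihz =>
            rw [map_add]; exact add_mem ihy ihz
        | mul y z hy hz ihy ihz =>
            rw [hP_right]
            exact add_mem (mul_mem hy ihz) (mul_mem ihy hz)
    | algebraMap r =>
        intro y hy
        rw [Algebra.algebraMap_eq_smul_one, map_smul, LinearMap.smul_apply, hP_one]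
        simp only [LinearMap.zero_apply, smul_zero]
        exact zero_mem _
    | add x x' hx hx' ihx ihx' =>
        intro y hy
        rw [map_add, LinearMap.add_apply]
        exact add_mem (ihx y hy) (ihx' y hy)
    | mul x x' hx hx' ihx ihx' =>
        intro y hy
        rw [hP_left]
        exact add_mem (mul_mem hx (ihx' y hy)) (mul_mem hx' (ihx y hy))
  -- ==================== conclusion ====================
  refine ⟨P, hP_anti, hP_right, hP_left, hPgen, hJac, htr, ?_⟩
  intro P' hP'anti hP'right hP'left hP'gen
  have hgenEq : ∀ (a : A) (i j : Fin n), P' (X a i j) = P (X a i j) := by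
    intro a i j
    refine derivext htop _ _ (fun y z => hP'right _ y z) (fun y z => hP_right _ y z) ?_
    rintro x ⟨⟨b, l, m⟩, rfl⟩
    rw [hP'gen, hPgen]
  have hflipEq : ∀ y : R, P'.flip y = P.flip y := by
    intro y
    refine derivext htop _ _ ?_ ?_ ?_
    · intro z w
      simp only [LinearMap.flip_apply]
      rw [hP'left z w y]; ring
    · intro z w
      simp only [LinearMap.flip_apply]
      rw [hP_left z w y]; ring
    · rintro x ⟨⟨a, i, j⟩, rfl⟩
      simp only [LinearMap.flip_apply]
      rw [hgenEq a i j]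
  ext x y
  have := congrArg (fun f : R →ₗ[k] R => f x) (hflipEq y)
  simpa using this
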